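/- Let q ≥ 2, m ≥ 1 be integers and for nonnegative integers t let Q(t) = ∏_{l=1}^{m}(1 - 1/q^{t·l}). Then ∑_{t=1}^{∞} (1 - Q(t)·(1 - 1/q^t)^{2m-2}) ≤ ∑_{t=1}^{∞} (1 - (1 - 1/q^t)^{3m-2}) = ∑_{k=1}^{3m-2} (-1)^{k-1} C(3m-2,k)/(q^k - 1). -/

import Mathlib

open Finset

private lemma expand13 (n : ℕ) (y : ℝ) :
    1 - (1 - y)^n = ∑ k ∈ Icc 1 n, (-1:ℝ)^(k-1) * (n.choose k) * y^k := by
  have h1 : (1 - y)^n = ∑ k ∈ Finset.range (n+1), (-y)^k * (n.choose k) := by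
    rw [sub_eq_add_neg, add_comm, add_pow]
    simp
  rw [h1, sum_range_eq_add_Ico _ (Nat.succ_pos n), Nat.succ_eq_add_one, Finset.Ico_add_one_right_eq_Icc]
  simp only [pow_zero, Nat.choose_zero_right, Nat.cast_one, mul_one,
    sub_add_eq_sub_sub, sub_self, zero_sub, ← Finset.sum_neg_distrib]
  refine Finset.sum_congr rfl fun k hk => ?_
  obtain ⟨k, rfl⟩ : ∃ j, k = j + 1 := ⟨k - 1, by simp at hk; omega⟩
  rw [neg_pow]
  simp only [Nat.add_sub_cancel]
  ring

/-- Let `q ≥ 2`, `m ≥ 1` be integers and `Q(t) = ∏_{l=1}^m (1 - 1/q^{t l})`. Then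
`∑_{t=1}^∞ (1 - Q(t)(1 - 1/q^t)^{2m-2}) ≤ ∑_{t=1}^∞ (1 - (1 - 1/q^t)^{3m-2})
 = ∑_{k=1}^{3m-2} (-1)^{k-1} C(3m-2,k)/(q^k - 1)`. -/
theorem stmt13 (q m : ℕ) (hq : 2 ≤ q) (hm : 1 ≤ m)
    (Q : ℕ → ℝ) (hQ : ∀ t, Q t = ∏ l ∈ Finset.Icc 1 m, (1 - 1 / (q : ℝ) ^ (t * l))) :
    (∑' t : ℕ, (1 - Q (t + 1) * (1 - 1 / (q : ℝ) ^ (t + 1)) ^ (2 * m - 2))) ≤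
        (∑' t : ℕ, (1 - (1 - 1 / (q : ℝ) ^ (t + 1)) ^ (3 * m - 2))) ∧
      (∑' t : ℕ, (1 - (1 - 1 / (q : ℝ) ^ (t + 1)) ^ (3 * m - 2))) =
        ∑ k ∈ Finset.Icc 1 (3 * m - 2),
          (-1 : ℝ) ^ (k - 1) * ((3 * m - 2).choose k : ℝ) / ((q : ℝ) ^ k - 1) := by
  have hq1 : (1:ℝ) < (q:ℝ) := by exact_mod_cast (by omega : 1 < q)
  have hq0 : (0:ℝ) < (q:ℝ) := lt_trans one_pos hq1
  set n := 3 * m - 2 with hn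
  set x : ℕ → ℝ := fun t => 1 / (q:ℝ)^(t+1) with hx
  have hxpos : ∀ t, 0 < x t := fun t => by positivity
  have hxlt1 : ∀ t, x t < 1 := fun t => by
    rw [hx, div_lt_one (by positivity)]
    exact one_lt_pow₀ hq1 (by omega)
  have hx01 : ∀ t, (0:ℝ) ≤ 1 - x t := fun t => by linarith [hxlt1 t]
  have hQlb : ∀ t, (1 - x t)^m ≤ Q (t+1) := by
    intro t
    rw [hQ]
    calc (1 - x t)^m = ∏ _l ∈ Icc 1 m, (1 - x t) := by
          rw [Finset.prod_const, Nat.card_Icc]; norm_num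
      _ ≤ _ := by
          refine Finset.prod_le_prod (fun l _ => hx01 t) (fun l hl => ?_)
          have hl1 : 1 ≤ l := (Finset.mem_Icc.mp hl).1
          have hle : (q:ℝ)^(t+1) ≤ (q:ℝ)^((t+1)*l) :=
            pow_le_pow_right₀ hq1.le (Nat.le_mul_of_pos_right _ (by omega))
          have h1 : 1 / (q:ℝ)^((t+1)*l) ≤ x t :=
            one_div_le_one_div_of_le (by positivity) hle
          linarith
  have hQub : ∀ t, Q (t+1) ≤ 1 := by
    intro t
    rw [hQ]
    refine Finset.prod_le_one (fun l hl => ?_) (fun l _ => ?_)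
    · have h1 : 1 / (q:ℝ)^((t+1)*l) ≤ 1 := by
        rw [div_le_one (by positivity)]
        exact one_le_pow₀ hq1.le
      linarith
    · have : (0:ℝ) < 1 / (q:ℝ)^((t+1)*l) := by positivity
      linarith
  have hQnn : ∀ t, 0 ≤ Q (t+1) := fun t =>
    le_trans (pow_nonneg (hx01 t) m) (hQlb t)
  -- termwise inequality
  have hterm : ∀ t, 1 - Q (t+1) * (1 - x t)^(2*m-2) ≤ 1 - (1 - x t)^n := by
    intro t
    have h1 : (1 - x t)^n = (1 - x t)^m * (1 - x t)^(2*m-2) := by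
      rw [← pow_add]; congr 1; omega
    have h2 : (1 - x t)^m * (1 - x t)^(2*m-2) ≤ Q (t+1) * (1 - x t)^(2*m-2) :=
      mul_le_mul_of_nonneg_right (hQlb t) (pow_nonneg (hx01 t) _)
    rw [h1]; linarith
  have htermnn : ∀ t, 0 ≤ 1 - Q (t+1) * (1 - x t)^(2*m-2) := by
    intro t
    have h1 : (1 - x t)^(2*m-2) ≤ 1 := pow_le_one₀ (hx01 t) (by linarith [hxpos t])
    have h2 : Q (t+1) * (1 - x t)^(2*m-2) ≤ 1 * 1 :=
      mul_le_mul (hQub t) h1 (pow_nonneg (hx01 t) _) zero_le_one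
    linarith
  -- geometric data per k
  have hr : ∀ k : ℕ, 1 ≤ k → (0:ℝ) ≤ 1/(q:ℝ)^k ∧ 1/(q:ℝ)^k < 1 := by
    intro k hk
    constructor
    · positivity
    · rw [div_lt_one (by positivity)]
      exact one_lt_pow₀ hq1 (by omega)
  -- rewrite big term
  have hbig : ∀ t, 1 - (1 - x t)^n
      = ∑ k ∈ Icc 1 n, ((-1:ℝ)^(k-1) * (n.choose k)) * (1/(q:ℝ)^k)^(t+1) := by
    intro t
    rw [expand13 n (x t)]
    refine Finset.sum_congr rfl fun k _ => ?_
    have : (x t)^k = (1/(q:ℝ)^k)^(t+1) := by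
      rw [hx]
      simp only [one_div, ← inv_pow, ← pow_mul]
      rw [mul_comm]
    rw [this, mul_assoc]
  have hsumk : ∀ k ∈ Icc 1 n,
      Summable (fun t : ℕ => ((-1:ℝ)^(k-1) * (n.choose k)) * (1/(q:ℝ)^k)^(t+1)) := by
    intro k hk
    obtain ⟨h0, h1⟩ := hr k (Finset.mem_Icc.mp hk).1
    have := (summable_geometric_of_lt_one h0 h1).mul_left
      ((-1:ℝ)^(k-1) * (n.choose k) * (1/(q:ℝ)^k))
    refine this.congr fun t => ?_
    rw [pow_succ]
    ring
  have hgsum : Summable (fun t : ℕ => 1 - (1 - x t)^n) := by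
    refine (summable_sum (f := fun k => fun t : ℕ =>
      ((-1:ℝ)^(k-1) * (n.choose k)) * (1/(q:ℝ)^k)^(t+1)) hsumk).congr fun t => ?_
    exact (hbig t).symm
  have hfsum : Summable (fun t : ℕ => 1 - Q (t+1) * (1 - x t)^(2*m-2)) :=
    hgsum.of_nonneg_of_le htermnn hterm
  refine ⟨Summable.tsum_le_tsum hterm hfsum hgsum, ?_⟩
  -- evaluate
  calc (∑' t : ℕ, (1 - (1 - x t)^n))
      = ∑' t : ℕ, ∑ k ∈ Icc 1 n, ((-1:ℝ)^(k-1) * (n.choose k)) * (1/(q:ℝ)^k)^(t+1) :=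
        tsum_congr hbig
    _ = ∑ k ∈ Icc 1 n, ∑' t : ℕ, ((-1:ℝ)^(k-1) * (n.choose k)) * (1/(q:ℝ)^k)^(t+1) :=
        Summable.tsum_finsetSum hsumk
    _ = ∑ k ∈ Icc 1 n, (-1:ℝ)^(k-1) * (n.choose k) / ((q:ℝ)^k - 1) := by
        refine Finset.sum_congr rfl fun k hk => ?_
        obtain ⟨h0, h1⟩ := hr k (Finset.mem_Icc.mp hk).1
        have hgeo : ∑' t : ℕ, (1/(q:ℝ)^k)^(t+1) = (1/(q:ℝ)^k) * (1 - 1/(q:ℝ)^k)⁻¹ := by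
          rw [← tsum_geometric_of_lt_one h0 h1, ← tsum_mul_left]
          exact tsum_congr fun t => by rw [pow_succ]; ring
        rw [tsum_mul_left, hgeo]
        have hqk : (0:ℝ) < (q:ℝ)^k := by positivity
        have hqk1 : (q:ℝ)^k - 1 ≠ 0 := by
          have : (1:ℝ) < (q:ℝ)^k := by
            rw [div_lt_one hqk] at h1; linarith
          linarith
        field_simp
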